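/- Assume (y_i)_{i∈I} satisfies y_i ∈ A_i and h^j_i(y_j) = y_i for all i ≤ j in I. Define f : M → M by f(x) = x · y_i for x in the copy of F(A_i). Then f is a bijection of M without fixed points which maps each F(A_i) onto itself, preserves each relation R_{i,z} (i.e. (y, w) ∈ R_{i,z} iff (f(y), f(w)) ∈ R_{i,z}), and commutes with the induced homomorphisms: ĥ^j_i(f(x)) = f(ĥ^j_i(x)) for all i ≤ j and all x ∈ F(A_j). Thus f is a fixed-point-free automorphism of the structure 𝔐 = (M, (F(A_i))_{i∈I}, (R_{i,z})_{i∈I, z∈F(A_i)}, (ĥ^j_i)_{i≤j}). -/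

import Mathlib

/-- The relation `R_{i,z} = {(y, z·y) : y ∈ F(A_i)}`, viewed as a binary relation on
the disjoint union `M = Σ i, F(A_i)` (supported on the copy of `F(A_i)`). -/
def FG.Rel {I : Type*} {A : I → Type*} (i : I) (z : FreeGroup (A i))
    (m m' : Σ j, FreeGroup (A j)) : Prop :=
  ∃ a : FreeGroup (A i), m = ⟨i, a⟩ ∧ m' = ⟨i, z * a⟩

/-- The graph of the induced homomorphism `ĥ^j_i : F(A_j) → F(A_i)`, viewed as a
binary relation on the disjoint union `M = Σ k, F(A_k)`:
`HRel h i j hij m m'` says `m ∈ F(A_j)` and `m' = ĥ^j_i(m)`. -/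
def FG.HRel {I : Type*} [Preorder I] {A : I → Type*}
    (h : ∀ i j, i ≤ j → A j → A i) (i j : I) (hij : i ≤ j)
    (m m' : Σ k, FreeGroup (A k)) : Prop :=
  ∃ x : FreeGroup (A j), m = ⟨j, x⟩ ∧ m' = ⟨i, FreeGroup.map (h i j hij) x⟩

/-- If `y_i ∈ A_i` with `h^j_i(y_j) = y_i` for `i ≤ j`, then `f(x) = x · y_i`
(for `x` in the copy of `F(A_i)`) is a fixed-point-free bijection of
`M = Σ i, F(A_i)` mapping each `F(A_i)` onto itself, preserving each relation
`R_{i,z}`, and commuting with the induced homomorphisms `ĥ^j_i`; i.e. `f` is a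
fixed-point-free automorphism of the structure `𝔐`. -/
theorem stmt5 {I : Type*} [PartialOrder I] [IsDirected I (· ≤ ·)]
    {A : I → Type*} [∀ i, Nonempty (A i)]
    (h : ∀ i j, i ≤ j → A j → A i)
    (hid : ∀ i (x : A i), h i i le_rfl x = x)
    (hcomp : ∀ i j k (hij : i ≤ j) (hjk : j ≤ k) (x : A k),
      h i k (le_trans hij hjk) x = h i j hij (h j k hjk x))
    (y : ∀ i, A i)
    (hy : ∀ i j (hij : i ≤ j), h i j hij (y j) = y i) :
    ∃ f : (Σ i, FreeGroup (A i)) → (Σ i, FreeGroup (A i)),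
      (∀ i (x : FreeGroup (A i)), f ⟨i, x⟩ = ⟨i, x * FreeGroup.of (y i)⟩) ∧
      Function.Bijective f ∧
      (∀ m, f m ≠ m) ∧
      (∀ m, (f m).1 = m.1) ∧
      (∀ i (z : FreeGroup (A i)) m m', FG.Rel i z m m' ↔ FG.Rel i z (f m) (f m')) ∧
      (∀ i j (hij : i ≤ j) (x : FreeGroup (A j)),
        FG.HRel h i j hij (f ⟨j, x⟩) (f ⟨i, FreeGroup.map (h i j hij) x⟩)) := by
  have fwd : ∀ (g : ∀ i, FreeGroup (A i)) i (z : FreeGroup (A i))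
      (m m' : Σ i, FreeGroup (A i)), FG.Rel i z m m' →
      FG.Rel i z ⟨m.1, m.2 * g m.1⟩ ⟨m'.1, m'.2 * g m'.1⟩ := by
    rintro g i z m m' ⟨c, rfl, rfl⟩
    exact ⟨c * g i, rfl, by rw [mul_assoc]⟩
  refine ⟨fun m => ⟨m.1, m.2 * FreeGroup.of (y m.1)⟩, fun i x => rfl, ?_, ?_, fun m => rfl, ?_, ?_⟩
  · constructor
    · rintro ⟨i, a⟩ ⟨j, b⟩ hab
      obtain ⟨rfl, hab2⟩ := Sigma.mk.inj_iff.mp hab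
      simp only [heq_eq_eq, mul_left_inj] at hab2
      exact congrArg _ hab2
    · rintro ⟨i, a⟩
      exact ⟨⟨i, a * (FreeGroup.of (y i))⁻¹⟩, by simp⟩
  · rintro ⟨i, a⟩ hfix
    have := (Sigma.mk.inj_iff.mp hfix).2
    simp only [heq_eq_eq] at this
    exact FreeGroup.of_ne_one _ (mul_eq_left.mp this)
  · intro i z m m'
    constructor
    · exact fwd (fun i => FreeGroup.of (y i)) i z m m'
    · intro hr
      have := fwd (fun i => (FreeGroup.of (y i))⁻¹) i z _ _ hr
      simpa [mul_assoc] using this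
  · intro i j hij x
    refine ⟨x * FreeGroup.of (y j), rfl, ?_⟩
    simp [hy i j hij]
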